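/- Every configuration ξ ∈ Ω_A^τ determines a unique positive admissible word ω (finite or infinite), called the stem of ξ, such that the set of positive group elements filled in ξ equals the set of finite prefixes of ω: {g ∈ 𝔽 : ξ_g = 1} ∩ 𝔽₊ = ⟦ω⟧. -/

import Mathlib

/-- The positive element of the free group `𝔽 = F(ℕ)` associated to a finite word. -/
def listToF (l : List ℕ) : FreeGroup ℕ := (l.map FreeGroup.of).prod

/-- An element of the free group is positive if it is a product of generators. -/
def IsPositive (g : FreeGroup ℕ) : Prop := ∃ l : List ℕ, g = listToF l

/-- The word-metric distance in the Cayley tree of the free group. -/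
def fgDist (a b : FreeGroup ℕ) : ℕ := (FreeGroup.toWord (a⁻¹ * b)).length

/-- The rules (R1)-(R4) defining the set `Ω_A^τ` of configurations on the Cayley tree:
`ξ_e = 1`; `ξ` is convex (geodesics between filled vertices are filled); a filled
vertex has at most one filled positive successor; and roots are governed by `A`. -/
def OmegaTau (A : ℕ → ℕ → Bool) (ξ : FreeGroup ℕ → Bool) : Prop :=
  ξ 1 = true ∧
  (∀ a b c : FreeGroup ℕ, ξ a = true → ξ b = true →
    fgDist a c + fgDist c b = fgDist a b → ξ c = true) ∧
  (∀ g : FreeGroup ℕ, ξ g = true → ∀ y z : ℕ,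
    ξ (g * FreeGroup.of y) = true → ξ (g * FreeGroup.of z) = true → y = z) ∧
  (∀ (g : FreeGroup ℕ) (y : ℕ), ξ g = true → ξ (g * FreeGroup.of y) = true →
    ∀ x : ℕ, (ξ (g * (FreeGroup.of x)⁻¹) = true ↔ A x y = true))

lemma listToF_concat (l : List ℕ) (y : ℕ) : listToF (l ++ [y]) = listToF l * FreeGroup.of y := by
  simp [listToF]
lemma listToF_eq_mk (l : List ℕ) : listToF l = FreeGroup.mk (l.map fun x => (x, true)) := by
  induction l with
  | nil => rfl
  | cons a t ih => simp [listToF, List.map_cons, List.prod_cons] at ih ⊢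
                   rw [show (FreeGroup.of a : FreeGroup ℕ) = FreeGroup.mk [(a,true)] from rfl, ih, FreeGroup.mul_mk]; rfl
lemma reduce_pos (l : List ℕ) : FreeGroup.reduce (l.map fun x => (x, true)) = l.map fun x => (x, true) := by
  induction l with
  | nil => rfl
  | cons a t ih =>
    rw [List.map_cons, FreeGroup.reduce.cons, ih]
    cases t with
    | nil => rfl
    | cons b t' => simp
lemma toWord_listToF (l : List ℕ) : (listToF l).toWord = l.map fun x => (x, true) := by
  rw [listToF_eq_mk, FreeGroup.toWord_mk, reduce_pos]

-- fgDist facts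
lemma fgDist_one_listToF (l : List ℕ) : fgDist 1 (listToF l) = l.length := by
  simp [fgDist, toWord_listToF]
lemma fgDist_geodesic (l : List ℕ) (y : ℕ) :
    fgDist 1 (listToF l) + fgDist (listToF l) (listToF (l ++ [y])) = fgDist 1 (listToF (l ++ [y])) := by
  have h1 : (listToF l)⁻¹ * listToF (l ++ [y]) = FreeGroup.of y := by
    rw [listToF_concat]; group
  have h2 : (FreeGroup.of y : FreeGroup ℕ) = listToF [y] := by simp [listToF]
  simp [fgDist, toWord_listToF, h1, h2]

section Stem
variable (ξ : FreeGroup ℕ → Bool)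
attribute [local instance] Classical.propDecidable

noncomputable def stem : ℕ → List ℕ
  | 0 => []
  | n + 1 =>
    if h : ∃ y, ξ (listToF (stem n ++ [y])) = true then stem n ++ [h.choose] else stem n


lemma stem_succ_of_ex {n : ℕ} (h : ∃ y, ξ (listToF (stem ξ n ++ [y])) = true) :
    stem ξ (n+1) = stem ξ n ++ [h.choose] := by
  rw [stem, dif_pos h]

lemma stem_succ_of_not {n : ℕ} (h : ¬ ∃ y, ξ (listToF (stem ξ n ++ [y])) = true) :
    stem ξ (n+1) = stem ξ n := by
  rw [stem, dif_neg h]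

lemma stem_filled (hone : ξ 1 = true) : ∀ n, ξ (listToF (stem ξ n)) = true := by
  intro n
  induction n with
  | zero => simpa [listToF, stem] using hone
  | succ n ih =>
    by_cases h : ∃ y, ξ (listToF (stem ξ n ++ [y])) = true
    · rw [stem_succ_of_ex ξ h]; exact h.choose_spec
    · rw [stem_succ_of_not ξ h]; exact ih

lemma stem_prefix_succ (n : ℕ) : stem ξ n <+: stem ξ (n+1) := by
  by_cases h : ∃ y, ξ (listToF (stem ξ n ++ [y])) = true
  · rw [stem_succ_of_ex ξ h]; exact ⟨[h.choose], rfl⟩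
  · rw [stem_succ_of_not ξ h]

lemma stem_prefix {m n : ℕ} (h : m ≤ n) : stem ξ m <+: stem ξ n := by
  induction n with
  | zero => simp_all
  | succ n ih =>
    rcases Nat.lt_or_ge m (n+1) with h' | h'
    · exact (ih (Nat.lt_succ_iff.mp h')).trans (stem_prefix_succ ξ n)
    · have : m = n+1 := le_antisymm h h'
      subst this; rfl

lemma stem_len_le (n : ℕ) : (stem ξ n).length ≤ n := by
  induction n with
  | zero => simp [stem]
  | succ n ih =>
    by_cases h : ∃ y, ξ (listToF (stem ξ n ++ [y])) = true
    · rw [stem_succ_of_ex ξ h]; simpa using ih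
    · rw [stem_succ_of_not ξ h]; omega

lemma stem_stall {n : ℕ} (h : ¬ ∃ y, ξ (listToF (stem ξ n ++ [y])) = true) :
    ∀ m, n ≤ m → stem ξ m = stem ξ n := by
  intro m hm
  induction m with
  | zero => simp_all
  | succ m ih =>
    rcases Nat.lt_or_ge n (m+1) with h' | h'
    · have hmn := ih (Nat.lt_succ_iff.mp h')
      rw [← hmn] at h ⊢
      exact stem_succ_of_not ξ h
    · have : n = m+1 := le_antisymm hm h'
      simp [this]

lemma stem_len_lt_stall {n : ℕ} (h : (stem ξ n).length < n) :
    ¬ ∃ y, ξ (listToF (stem ξ n ++ [y])) = true := by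
  induction n with
  | zero => omega
  | succ n ih =>
    by_cases hx : ∃ y, ξ (listToF (stem ξ n ++ [y])) = true
    · rw [stem_succ_of_ex ξ hx] at h ⊢
      have : (stem ξ n).length < n := by simpa using h
      exact absurd hx (ih this)
    · rwa [stem_succ_of_not ξ hx] at h ⊢


noncomputable def stemL : ℕ∞ := ⨆ n : ℕ, ((stem ξ n).length : ℕ∞)

noncomputable def stemW (k : ℕ) : ℕ := (stem ξ (k+1)).getD k 0

lemma stem_eventually {n : ℕ} (h : (stem ξ n).length < n) :
    ∀ m, (stem ξ m).length ≤ (stem ξ n).length := by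
  intro m
  rcases le_or_gt m n with h' | h'
  · exact (stem_prefix ξ h').length_le
  · rw [stem_stall ξ (stem_len_lt_stall ξ h) m h'.le]

lemma le_stemL_iff (n : ℕ) : (n : ℕ∞) ≤ stemL ξ ↔ (stem ξ n).length = n := by
  constructor
  · intro h
    by_contra hne
    have hlt : (stem ξ n).length < n := lt_of_le_of_ne (stem_len_le ξ n) hne
    have : stemL ξ ≤ ((stem ξ n).length : ℕ∞) :=
      iSup_le fun m => by exact_mod_cast stem_eventually ξ hlt m
    have := h.trans this
    exact absurd (by exact_mod_cast this) (Nat.not_le.mpr hlt)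
  · intro h
    calc (n : ℕ∞) = ((stem ξ n).length : ℕ∞) := by rw [h]
    _ ≤ stemL ξ := le_iSup (fun m : ℕ => ((stem ξ m).length : ℕ∞)) n

lemma stem_len_of_le {m n : ℕ} (hmn : m ≤ n) (h : (stem ξ n).length = n) :
    (stem ξ m).length = m := by
  by_contra hne
  have hlt : (stem ξ m).length < m := lt_of_le_of_ne (stem_len_le ξ m) hne
  have := stem_eventually ξ hlt n
  omega

lemma stem_getD {n i : ℕ} (h : (stem ξ n).length = n) (hi : i < n) :
    (stem ξ n).getD i 0 = stemW ξ i := by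
  have h1 : (stem ξ (i+1)).length = i+1 := stem_len_of_le ξ hi h
  have hp : stem ξ (i+1) <+: stem ξ n := stem_prefix ξ hi
  have hi1 : i < (stem ξ (i+1)).length := by omega
  rw [stemW, List.getD_eq_getElem _ _ hi1, List.getD_eq_getElem _ _ (by omega : i < (stem ξ n).length)]
  exact (hp.getElem hi1).symm

lemma stem_succ_eq {n : ℕ} (h : (stem ξ (n+1)).length = n+1) :
    stem ξ (n+1) = stem ξ n ++ [stemW ξ n] := by
  by_cases hx : ∃ y, ξ (listToF (stem ξ n ++ [y])) = true
  · have he := stem_succ_of_ex ξ hx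
    have hn : (stem ξ n).length = n := stem_len_of_le ξ (by omega) h
    have : (stem ξ (n+1)).getD n 0 = hx.choose := by
      rw [he, List.getD_eq_getElem _ _ (by simp [hn])]
      simp [hn]
    rw [he, ← this]; rfl
  · rw [stem_succ_of_not ξ hx] at h
    have := stem_len_le ξ n; omega

end Stem

lemma listToF_injective : Function.Injective listToF := by
  intro a b h
  have := congrArg FreeGroup.toWord h
  rw [toWord_listToF, toWord_listToF] at this
  exact List.map_injective_iff.2 (fun x y hxy => by simpa using congrArg Prod.fst hxy) this

lemma filled_drop_last {A : ℕ → ℕ → Bool} {ξ : FreeGroup ℕ → Bool} (hξ : OmegaTau A ξ)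
    {l : List ℕ} {y : ℕ} (h : ξ (listToF (l ++ [y])) = true) : ξ (listToF l) = true := by
  have hone : ξ (listToF []) = true := by simpa [listToF] using hξ.1
  exact hξ.2.1 1 (listToF (l ++ [y])) (listToF l) (by simpa [listToF] using hξ.1) h
    (by rw [show fgDist (listToF l) (listToF (l ++ [y])) = fgDist 1 (listToF (l ++ [y])) - fgDist 1 (listToF l) from ?_]
        · have := fgDist_geodesic l y
          have h1 : fgDist 1 (listToF l) = l.length := fgDist_one_listToF l
          have h2 : fgDist 1 (listToF (l ++ [y])) = l.length + 1 := by
            simpa using fgDist_one_listToF (l ++ [y])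
          omega
        · have := fgDist_geodesic l y; omega)

lemma filled_eq_stem {A : ℕ → ℕ → Bool} {ξ : FreeGroup ℕ → Bool} (hξ : OmegaTau A ξ) :
    ∀ l : List ℕ, ξ (listToF l) = true → stem ξ l.length = l := by
  intro l
  induction l using List.reverseRecOn with
  | nil => intro _; rfl
  | append_singleton l y ih =>
    intro h
    have hl : ξ (listToF l) = true := filled_drop_last hξ h
    have hstem := ih hl
    set n := l.length with hn
    have hx : ∃ z, ξ (listToF (stem ξ n ++ [z])) = true := ⟨y, by rw [hstem]; exact h⟩
    have he := stem_succ_of_ex ξ hx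
    have hyz : y = hx.choose := by
      apply hξ.2.2.1 (listToF l) hl
      · rw [← listToF_concat]; exact h
      · rw [← listToF_concat, ← hstem]; exact hx.choose_spec
    have : (l ++ [y]).length = n + 1 := by simp [hn]
    rw [this, he]
    exact congrArg₂ (· ++ ·) hstem (congrArg (fun z => [z]) hyz.symm)


lemma enat_le_of_nat_le {a b : ℕ∞} (h : ∀ n : ℕ, (n:ℕ∞) ≤ a → (n:ℕ∞) ≤ b) : a ≤ b := by
  induction a using ENat.recTopCoe with
  | top =>
    induction b using ENat.recTopCoe with
    | top => exact le_rfl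
    | coe m =>
      have := h (m+1) le_top
      exact absurd (by exact_mod_cast this : m+1 ≤ m) (by omega)
  | coe n => exact h n le_rfl

lemma enat_succ_le {n : ℕ} {a : ℕ∞} (h : (n : ℕ∞) < a) : ((n+1 : ℕ) : ℕ∞) ≤ a := by
  have := (ENat.add_one_le_iff (by simp : (n:ℕ∞) ≠ ⊤)).2 h
  exact_mod_cast this

/-- Every configuration `ξ ∈ Ω_A^τ` has a unique stem: a positive admissible word
(finite of length `L` or infinite, `L = ⊤`) whose set of finite prefixes is exactly the
set of positive elements of the free group filled in `ξ`. -/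
theorem omegaTau_exists_unique_stem
    (A : ℕ → ℕ → Bool) (ξ : FreeGroup ℕ → Bool) (hξ : OmegaTau A ξ) :
    ∃ (L : ℕ∞) (ω : ℕ → ℕ),
      (∀ k : ℕ, ((k + 1 : ℕ) : ℕ∞) < L → A (ω k) (ω (k + 1)) = true) ∧
      (∀ g : FreeGroup ℕ,
        (IsPositive g ∧ ξ g = true) ↔
          ∃ l : List ℕ, g = listToF l ∧ (l.length : ℕ∞) ≤ L ∧
            ∀ i, i < l.length → l.getD i 0 = ω i) ∧
      (∀ (L' : ℕ∞) (ω' : ℕ → ℕ),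
        ((∀ k : ℕ, ((k + 1 : ℕ) : ℕ∞) < L' → A (ω' k) (ω' (k + 1)) = true) ∧
         (∀ g : FreeGroup ℕ,
            (IsPositive g ∧ ξ g = true) ↔
              ∃ l : List ℕ, g = listToF l ∧ (l.length : ℕ∞) ≤ L' ∧
                ∀ i, i < l.length → l.getD i 0 = ω' i)) →
        (L' = L ∧ ∀ k : ℕ, (k : ℕ∞) < L → ω' k = ω k)) := by
  refine ⟨stemL ξ, stemW ξ, ?_, ?_, ?_⟩
  · -- admissibility
    intro k hk
    have h2 : ((k+2 : ℕ) : ℕ∞) ≤ stemL ξ := enat_succ_le hk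
    have hl2 : (stem ξ (k+2)).length = k+2 := (le_stemL_iff ξ (k+2)).1 h2
    have hl1 : (stem ξ (k+1)).length = k+1 := stem_len_of_le ξ (by omega) hl2
    have he2 : stem ξ (k+2) = stem ξ (k+1) ++ [stemW ξ (k+1)] := stem_succ_eq ξ hl2
    have he1 : stem ξ (k+1) = stem ξ k ++ [stemW ξ k] := stem_succ_eq ξ hl1
    have hR4 := hξ.2.2.2 (listToF (stem ξ (k+1))) (stemW ξ (k+1))
      (stem_filled ξ hξ.1 (k+1))
      (by rw [← listToF_concat, ← he2]; exact stem_filled ξ hξ.1 (k+2)) (stemW ξ k)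
    apply hR4.1
    have : listToF (stem ξ (k+1)) * (FreeGroup.of (stemW ξ k))⁻¹ = listToF (stem ξ k) := by
      rw [he1, listToF_concat]; group
    rw [this]; exact stem_filled ξ hξ.1 k
  · -- characterization
    intro g
    constructor
    · rintro ⟨⟨l, hg⟩, hfill⟩
      subst hg
      have hs := filled_eq_stem hξ l hfill
      have hlen : (stem ξ l.length).length = l.length := by rw [hs]
      refine ⟨l, rfl, (le_stemL_iff ξ l.length).2 hlen, fun i hi => ?_⟩
      rw [← hs]; exact stem_getD ξ hlen hi
    · rintro ⟨l, hg, hlen, hpre⟩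
      have hlen' : (stem ξ l.length).length = l.length := (le_stemL_iff ξ l.length).1 hlen
      have hls : l = stem ξ l.length := by
        apply List.ext_getElem (by omega)
        intro i h1 h2
        have e1 : l.getD i 0 = l[i] := List.getD_eq_getElem _ _ h1
        have e2 : (stem ξ l.length).getD i 0 = (stem ξ l.length)[i] := List.getD_eq_getElem _ _ h2
        rw [← e1, ← e2, hpre i h1, ← stem_getD ξ hlen' (by omega)]
      refine ⟨⟨l, hg⟩, ?_⟩
      rw [hg, hls]; exact stem_filled ξ hξ.1 l.length
  · -- uniqueness
    intro L' ω' ⟨_, hchar'⟩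
    have hchar : ∀ g : FreeGroup ℕ,
        (IsPositive g ∧ ξ g = true) ↔
          ∃ l : List ℕ, g = listToF l ∧ (l.length : ℕ∞) ≤ stemL ξ ∧
            ∀ i, i < l.length → l.getD i 0 = stemW ξ i := by
      intro g
      constructor
      · rintro ⟨⟨l, hg⟩, hfill⟩
        subst hg
        have hs := filled_eq_stem hξ l hfill
        have hlen : (stem ξ l.length).length = l.length := by rw [hs]
        refine ⟨l, rfl, (le_stemL_iff ξ l.length).2 hlen, fun i hi => ?_⟩
        rw [← hs]; exact stem_getD ξ hlen hi
      · rintro ⟨l, hg, hlen, hpre⟩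
        have hlen' : (stem ξ l.length).length = l.length := (le_stemL_iff ξ l.length).1 hlen
        have hls : l = stem ξ l.length := by
          apply List.ext_getElem (by omega)
          intro i h1 h2
          have e1 : l.getD i 0 = l[i] := List.getD_eq_getElem _ _ h1
          have e2 : (stem ξ l.length).getD i 0 = (stem ξ l.length)[i] := List.getD_eq_getElem _ _ h2
          rw [← e1, ← e2, hpre i h1, ← stem_getD ξ hlen' (by omega)]
        refine ⟨⟨l, hg⟩, ?_⟩
        rw [hg, hls]; exact stem_filled ξ hξ.1 l.length
    have key : ∀ n : ℕ, (n:ℕ∞) ≤ stemL ξ →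
        ((n:ℕ∞) ≤ L' ∧ ∀ i, i < n → ω' i = stemW ξ i) := by
      intro n hn
      set l : List ℕ := List.ofFn (fun i : Fin n => stemW ξ i) with hl
      have hlen : l.length = n := by simp [hl]
      have hget : ∀ i, i < l.length → l.getD i 0 = stemW ξ i := by
        intro i hi
        rw [List.getD_eq_getElem _ _ hi]
        simp [hl]
      have hpos : IsPositive (listToF l) ∧ ξ (listToF l) = true :=
        (hchar (listToF l)).2 ⟨l, rfl, by rw [hlen]; exact hn, hget⟩
      obtain ⟨l', hg', hlen', hpre'⟩ := (hchar' (listToF l)).1 hpos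
      have hll : l' = l := listToF_injective hg'.symm
      subst hll
      rw [hlen] at hlen' hpre'
      refine ⟨hlen', fun i hi => ?_⟩
      rw [← hpre' i hi, hget i (by omega)]
    have key' : ∀ n : ℕ, (n:ℕ∞) ≤ L' → (n:ℕ∞) ≤ stemL ξ := by
      intro n hn
      set l : List ℕ := List.ofFn (fun i : Fin n => ω' i) with hl
      have hlen : l.length = n := by simp [hl]
      have hget : ∀ i, i < l.length → l.getD i 0 = ω' i := by
        intro i hi
        rw [List.getD_eq_getElem _ _ hi]
        simp [hl]
      have hpos : IsPositive (listToF l) ∧ ξ (listToF l) = true :=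
        (hchar' (listToF l)).2 ⟨l, rfl, by rw [hlen]; exact hn, hget⟩
      obtain ⟨l', hg', hlen', _⟩ := (hchar (listToF l)).1 hpos
      have hll : l' = l := listToF_injective hg'.symm
      subst hll
      rwa [hlen] at hlen'
    constructor
    · exact le_antisymm (enat_le_of_nat_le key') (enat_le_of_nat_le fun n hn => (key n hn).1)
    · intro k hk
      exact (key (k+1) (enat_succ_le hk)).2 k (by omega)
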